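/- Let Δ > 0, let h ≥ 1 and ℓ be reals. Let f and g be affine functions on [0, Δ] satisfying g(0) − f(0) ≥ 0, g(Δ) − f(Δ) ≥ 0, and max(g(0) − f(0), g(Δ) − f(Δ)) > 2^{ℓ−h}. Let f̃ be an affine function on [0, Δ] with 0 ≤ f̃(0) − f(0) ≤ 2^{ℓ−2h} and 0 ≤ f̃(Δ) − f(Δ) ≤ 2^{ℓ−2h}. Then for every x in the center slab [Δ·2^{−h}, Δ·(1 − 2^{−h})], f(x) ≤ f̃(x) < g(x). -/

import Mathlib

lemma affine_interp {f : ℝ → ℝ} (hf : ∃ p q : ℝ, ∀ x, f x = p * x + q)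
    {Δ t : ℝ} : f (t * Δ) = (1 - t) * f 0 + t * f Δ := by
  obtain ⟨p, q, hpq⟩ := hf
  simp [hpq]; ring

/-- Interleaving claim (2c) in the proof of Observation 4.1: rounding a segment `f`
upward by at most `2^{ℓ-2h}` at both endpoints keeps it (weakly above `f` and)
strictly below any non-crossing segment `g` whose separation from `f` exceeds
`2^{ℓ-h}` at one of the slab boundaries, everywhere in the center slab. -/
theorem center_slab_interleaving
    (Δ h ℓ : ℝ) (hΔ : 0 < Δ) (hh : 1 ≤ h)
    (f g ftilde : ℝ → ℝ)
    (hf : ∃ p q : ℝ, ∀ x, f x = p * x + q)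
    (hg : ∃ p q : ℝ, ∀ x, g x = p * x + q)
    (hft : ∃ p q : ℝ, ∀ x, ftilde x = p * x + q)
    (h0 : 0 ≤ g 0 - f 0) (h1 : 0 ≤ g Δ - f Δ)
    (hmax : max (g 0 - f 0) (g Δ - f Δ) > (2:ℝ) ^ (ℓ - h))
    (hr0 : 0 ≤ ftilde 0 - f 0) (hr0' : ftilde 0 - f 0 ≤ (2:ℝ) ^ (ℓ - 2 * h))
    (hr1 : 0 ≤ ftilde Δ - f Δ) (hr1' : ftilde Δ - f Δ ≤ (2:ℝ) ^ (ℓ - 2 * h)) :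
    ∀ x ∈ Set.Icc (Δ * (2:ℝ) ^ (-h)) (Δ * (1 - (2:ℝ) ^ (-h))),
      f x ≤ ftilde x ∧ ftilde x < g x := by

  rintro x ⟨hx0, hx1⟩
  set t : ℝ := x / Δ with ht
  have hxt : x = t * Δ := by rw [ht, div_mul_cancel₀ x hΔ.ne']
  have hR : (0:ℝ) < (2:ℝ) ^ (-h) := Real.rpow_pos_of_pos (by norm_num) _
  have hQ : (0:ℝ) < (2:ℝ) ^ (ℓ - 2 * h) := Real.rpow_pos_of_pos (by norm_num) _
  have ht0 : (2:ℝ) ^ (-h) ≤ t := by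
    rw [ht, le_div_iff₀ hΔ]; linarith [hx0]
  have ht1 : t ≤ 1 - (2:ℝ) ^ (-h) := by
    rw [ht, div_le_iff₀ hΔ]; linarith [hx1]
  have hPR : (2:ℝ) ^ (ℓ - h) * (2:ℝ) ^ (-h) = (2:ℝ) ^ (ℓ - 2 * h) := by
    rw [← Real.rpow_add (by norm_num)]; ring_nf
  have hP2Q : 2 * (2:ℝ) ^ (ℓ - 2 * h) ≤ (2:ℝ) ^ (ℓ - h) := by
    have e : (2:ℝ) * (2:ℝ) ^ (ℓ - 2 * h) = (2:ℝ) ^ (ℓ - 2 * h + 1) := by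
      rw [Real.rpow_add (by norm_num : (0:ℝ) < 2), Real.rpow_one]; ring
    rw [e]
    exact Real.rpow_le_rpow_of_exponent_le (by norm_num) (by linarith)
  have hfx : f x = (1 - t) * f 0 + t * f Δ := by rw [hxt]; exact affine_interp hf
  have hgx : g x = (1 - t) * g 0 + t * g Δ := by rw [hxt]; exact affine_interp hg
  have hftx : ftilde x = (1 - t) * ftilde 0 + t * ftilde Δ := by
    rw [hxt]; exact affine_interp hft
  have htpos : 0 < t := lt_of_lt_of_le hR ht0
  have ht1pos : 0 < 1 - t := by nlinarith
  have hPpos : (0:ℝ) < (2:ℝ) ^ (ℓ - h) := Real.rpow_pos_of_pos (by norm_num) _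
  have h1t : (2:ℝ) ^ (-h) ≤ 1 - t := by linarith
  have hkey : (2:ℝ) ^ (ℓ - 2 * h) ≤ (1 - t) * (2:ℝ) ^ (ℓ - h) := by
    calc (2:ℝ) ^ (ℓ - 2 * h) = (2:ℝ) ^ (-h) * (2:ℝ) ^ (ℓ - h) := by
          rw [← hPR]; ring
      _ ≤ (1 - t) * (2:ℝ) ^ (ℓ - h) := mul_le_mul_of_nonneg_right h1t hPpos.le
  constructor
  · rw [hfx, hftx]; nlinarith
  · rw [hftx, hgx]
    rcases max_cases (g 0 - f 0) (g Δ - f Δ) with ⟨he, _⟩ | ⟨he, _⟩ <;> rw [he] at hmax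
    · nlinarith [hkey, mul_lt_mul_of_pos_left hmax ht1pos, mul_le_mul_of_nonneg_left hr0' ht1pos.le,
        mul_le_mul_of_nonneg_left hr1' htpos.le, mul_le_mul_of_nonneg_left h1 htpos.le]
    · have hkey2 : (2:ℝ) ^ (ℓ - 2 * h) ≤ t * (2:ℝ) ^ (ℓ - h) := by
        calc (2:ℝ) ^ (ℓ - 2 * h) = (2:ℝ) ^ (-h) * (2:ℝ) ^ (ℓ - h) := by
              rw [← hPR]; ring
          _ ≤ t * (2:ℝ) ^ (ℓ - h) := mul_le_mul_of_nonneg_right ht0 hPpos.le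
      nlinarith [hkey2, mul_lt_mul_of_pos_left hmax htpos, mul_le_mul_of_nonneg_left hr1' htpos.le,
        mul_le_mul_of_nonneg_left hr0' ht1pos.le, mul_le_mul_of_nonneg_left h0 ht1pos.le]
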